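/- Let S be a set of vertices of a prime graph G. Then either the t-convex hull of S equals the t-interval of S, which in turn equals the P3-interval of S, or the t-convex hull of S equals V(G). -/

import Mathlib

open Set

variable {V : Type*}

/-- `p` is a triangle path: a path with no edge joining vertices at index
distance greater than 2 along the path. -/
def TPath (G : SimpleGraph V) {u v : V} (p : G.Walk u v) : Prop :=
  p.IsPath ∧ ∀ i j : ℕ, i + 2 < j →
    ∀ (hi : i < p.support.length) (hj : j < p.support.length),
      ¬ G.Adj (p.support.get ⟨i, hi⟩) (p.support.get ⟨j, hj⟩)

/-- `p` is a monophonic (induced) path: a path with no edge joining vertices at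
index distance greater than 1 along the path. -/
def MPath (G : SimpleGraph V) {u v : V} (p : G.Walk u v) : Prop :=
  p.IsPath ∧ ∀ i j : ℕ, i + 1 < j →
    ∀ (hi : i < p.support.length) (hj : j < p.support.length),
      ¬ G.Adj (p.support.get ⟨i, hi⟩) (p.support.get ⟨j, hj⟩)

/-- `p` is a geodesic (shortest path). -/
def GPath (G : SimpleGraph V) {u v : V} (p : G.Walk u v) : Prop :=
  p.IsPath ∧ ∀ q : G.Walk u v, p.length ≤ q.length

/-- `S` is convex in the triangle path convexity. -/
def TConvex (G : SimpleGraph V) (S : Set V) : Prop :=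
  ∀ ⦃u v : V⦄, u ∈ S → v ∈ S → ∀ p : G.Walk u v, TPath G p → ∀ w ∈ p.support, w ∈ S

/-- `S` is convex in the monophonic convexity. -/
def MConvex (G : SimpleGraph V) (S : Set V) : Prop :=
  ∀ ⦃u v : V⦄, u ∈ S → v ∈ S → ∀ p : G.Walk u v, MPath G p → ∀ w ∈ p.support, w ∈ S

/-- `S` is convex in the geodetic convexity. -/
def GConvex (G : SimpleGraph V) (S : Set V) : Prop :=
  ∀ ⦃u v : V⦄, u ∈ S → v ∈ S → ∀ p : G.Walk u v, GPath G p → ∀ w ∈ p.support, w ∈ S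

/-- `S` is `P₃`-convex: no vertex outside `S` has two neighbours in `S`. -/
def P3Convex (G : SimpleGraph V) (S : Set V) : Prop :=
  ∀ w ∉ S, ∀ a ∈ S, ∀ b ∈ S, G.Adj w a → G.Adj w b → a = b

/-- The triangle path interval of `S`. -/
def TInterval (G : SimpleGraph V) (S : Set V) : Set V :=
  S ∪ {w | ∃ u ∈ S, ∃ v ∈ S, ∃ p : G.Walk u v, TPath G p ∧ w ∈ p.support}

/-- The monophonic interval of `S`. -/
def MInterval (G : SimpleGraph V) (S : Set V) : Set V :=
  S ∪ {w | ∃ u ∈ S, ∃ v ∈ S, ∃ p : G.Walk u v, MPath G p ∧ w ∈ p.support}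

/-- The geodetic interval of `S`. -/
def GInterval (G : SimpleGraph V) (S : Set V) : Set V :=
  S ∪ {w | ∃ u ∈ S, ∃ v ∈ S, ∃ p : G.Walk u v, GPath G p ∧ w ∈ p.support}

/-- The `P₃`-interval of `S`: `S` together with the vertices having at least two
neighbours in `S`. -/
def P3Interval (G : SimpleGraph V) (S : Set V) : Set V :=
  S ∪ {w | w ∉ S ∧ ∃ a ∈ S, ∃ b ∈ S, a ≠ b ∧ G.Adj w a ∧ G.Adj w b}

/-- The convex hull of `S` in the triangle path convexity. -/
def THull (G : SimpleGraph V) (S : Set V) : Set V :=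
  ⋂₀ {C : Set V | S ⊆ C ∧ TConvex G C}

/-- The convex hull of `S` in the monophonic convexity. -/
def MHull (G : SimpleGraph V) (S : Set V) : Set V :=
  ⋂₀ {C : Set V | S ⊆ C ∧ MConvex G C}

/-- The convex hull of `S` in the geodetic convexity. -/
def GHull (G : SimpleGraph V) (S : Set V) : Set V :=
  ⋂₀ {C : Set V | S ⊆ C ∧ GConvex G C}

/-- `K` separates the vertices `a` and `b`: both lie outside `K` and every walk
between them meets `K`. -/
def Separates (G : SimpleGraph V) (K : Set V) (a b : V) : Prop :=
  a ∉ K ∧ b ∉ K ∧ ∀ p : G.Walk a b, ∃ w ∈ p.support, w ∈ K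

/-- `K` is a separator of `G`. -/
def IsSeparator (G : SimpleGraph V) (K : Set V) : Prop :=
  ∃ a b : V, Separates G K a b

/-- `G` is prime: it has no clique separator. -/
def IsPrime (G : SimpleGraph V) : Prop :=
  ¬ ∃ C : Set V, G.IsClique C ∧ IsSeparator G C

/-- `K` is a minimal separator for `a` and `b`. -/
def IsMinSeparator (G : SimpleGraph V) (K : Set V) (a b : V) : Prop :=
  Separates G K a b ∧ ∀ K' : Set V, K' ⊂ K → ¬ Separates G K' a b

/-- `W` induces a maximal prime subgraph of `G`. -/
def IsMPSubgraph (G : SimpleGraph V) (W : Set V) : Prop :=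
  IsPrime (G.induce W) ∧ ∀ W' : Set V, W ⊆ W' → IsPrime (G.induce W') → W' = W

/-- `C` is the vertex set of a connected component of `G - S`. -/
def IsCompOf (G : SimpleGraph V) (S C : Set V) : Prop :=
  C.Nonempty ∧ C ∩ S = ∅ ∧
  (∀ x ∈ C, ∀ y ∈ C, ∃ p : G.Walk x y, ∀ w ∈ p.support, w ∈ C) ∧
  (∀ x ∈ C, ∀ y : V, y ∉ S → G.Adj x y → y ∈ C)

section Aux

open SimpleGraph

variable {G : SimpleGraph V}

lemma support_get_getVert {u v : V} (p : G.Walk u v) (i : ℕ) (hi : i < p.support.length) :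
    p.support.get ⟨i, hi⟩ = p.getVert i := by
  induction p generalizing i with
  | nil =>
      simp only [Walk.support_nil, List.length_cons, List.length_nil] at hi
      interval_cases i
      rfl
  | cons h q ih =>
      cases i with
      | zero => rfl
      | succ n =>
          have hn : n < q.support.length := by
            simpa [Walk.support_cons] using hi
          have heq : (Walk.cons h q).support.get ⟨n + 1, hi⟩ = q.support.get ⟨n, hn⟩ := rfl
          rw [heq, ih n hn]
          rfl

lemma TPath.not_adj_getVert {u v : V} {p : G.Walk u v} (hp : TPath G p) {i j : ℕ}
    (hij : i + 2 < j) (hj : j ≤ p.length) : ¬ G.Adj (p.getVert i) (p.getVert j) := by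
  have hi' : i < p.support.length := by rw [Walk.length_support]; omega
  have hj' : j < p.support.length := by rw [Walk.length_support]; omega
  have := hp.2 i j hij hi' hj'
  rwa [support_get_getVert, support_get_getVert] at this

lemma tpath_of_getVert {u v : V} {p : G.Walk u v} (hp : p.IsPath)
    (h : ∀ i j : ℕ, i + 2 < j → j ≤ p.length → ¬ G.Adj (p.getVert i) (p.getVert j)) :
    TPath G p := by
  refine ⟨hp, fun i j hij hi hj => ?_⟩
  rw [support_get_getVert, support_get_getVert]
  exact h i j hij (by rw [Walk.length_support] at hj; omega)

lemma length_drop' {u v : V} (p : G.Walk u v) (n : ℕ) :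
    (p.drop n).length = p.length - n := by
  induction p generalizing n with
  | nil => cases n <;> simp [Walk.drop, Walk.getVert_of_length_le]
  | cons h q ih =>
      cases n with
      | zero => simp [Walk.drop]
      | succ m => simp [Walk.drop, ih, Walk.length_cons]

lemma support_drop_subset' {u v : V} (p : G.Walk u v) (n : ℕ) :
    ∀ w ∈ (p.drop n).support, w ∈ p.support := by
  induction p generalizing n with
  | nil => cases n <;> simp [Walk.drop, Walk.getVert_of_length_le]
  | cons h q ih =>
      cases n with
      | zero => simp [Walk.drop]
      | succ m =>
          intro w hw
          simp only [Walk.drop, Walk.support_copy] at hw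
          simp only [Walk.support_cons, List.mem_cons]
          exact Or.inr (ih m w hw)

lemma exists_prefix_walk {a b : V} (p : G.Walk a b) {i : ℕ} (hi : i ≤ p.length) :
    ∃ q : G.Walk a (p.getVert i), q.length = i ∧ ∀ w ∈ q.support, w ∈ p.support := by
  have hend : p.reverse.getVert (p.length - i) = p.getVert i := by
    rw [Walk.getVert_reverse]
    congr 1
    omega
  refine ⟨((p.reverse.drop (p.length - i)).reverse).copy rfl hend, ?_, ?_⟩
  · rw [Walk.length_copy, Walk.length_reverse, length_drop', Walk.length_reverse]
    omega
  · intro w hw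
    rw [Walk.support_copy, Walk.support_reverse, List.mem_reverse] at hw
    have := support_drop_subset' p.reverse _ w hw
    rwa [Walk.support_reverse, List.mem_reverse] at this

lemma exists_tpath {a b : V} (p : G.Walk a b) :
    ∃ q : G.Walk a b, TPath G q ∧ ∀ w ∈ q.support, w ∈ p.support := by
  classical
  generalize hn : p.length = n
  induction n using Nat.strong_induction_on generalizing p with
  | _ n ih =>
  set q := p.bypass with hqdef
  have hq : q.IsPath := p.bypass_isPath
  have hqsub : ∀ w ∈ q.support, w ∈ p.support := fun w hw => p.support_bypass_subset hw
  have hqlen : q.length ≤ p.length := p.length_bypass_le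
  by_cases htp : TPath G q
  · exact ⟨q, htp, hqsub⟩
  · have hB : ¬ (∀ i j : ℕ, i + 2 < j →
        ∀ (hi : i < q.support.length) (hj : j < q.support.length),
          ¬ G.Adj (q.support.get ⟨i, hi⟩) (q.support.get ⟨j, hj⟩)) :=
      fun hB => htp ⟨hq, hB⟩
    push_neg at hB
    obtain ⟨i, j, hij, hi, hj, hadj⟩ := hB
    rw [support_get_getVert, support_get_getVert] at hadj
    have hjle : j ≤ q.length := by rw [Walk.length_support] at hj; omega
    obtain ⟨q1, hq1len, hq1sub⟩ := exists_prefix_walk q (show i ≤ q.length by omega)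
    set q2 := q.drop j with hq2def
    set q' := q1.append (Walk.cons hadj q2) with hq'def
    have hq'len : q'.length < n := by
      have h2 : q2.length = q.length - j := length_drop' q j
      have : q'.length = q1.length + (q2.length + 1) := by
        rw [hq'def, Walk.length_append, Walk.length_cons]
      omega
    obtain ⟨r, hr, hrsub⟩ := ih q'.length hq'len q' rfl
    refine ⟨r, hr, fun w hw => ?_⟩
    have hw' := hrsub w hw
    rw [hq'def, Walk.mem_support_append_iff] at hw'
    rcases hw' with hw' | hw'
    · exact hqsub w (hq1sub w hw')
    · rw [Walk.support_cons, List.mem_cons] at hw'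
      rcases hw' with rfl | hw'
      · exact hqsub _ (by
          rw [Walk.mem_support_iff_exists_getVert]
          exact ⟨i, rfl, by omega⟩)
      · exact hqsub w (support_drop_subset' q j w hw')

lemma tpath_two {a w b : V} (h1 : G.Adj a w) (h2 : G.Adj w b) (hab : a ≠ b)
    (hwa : w ≠ a) (hwb : w ≠ b) :
    TPath G (Walk.cons h1 (Walk.cons h2 Walk.nil)) := by
  constructor
  · rw [Walk.isPath_def]
    simp [hab, hwa.symm, hwb]
  · intro i j hij hi hj
    have : j < 3 := by simpa using hj
    omega

lemma no_tpath_pair {a b : V} {q : G.Walk a b} (hq : TPath G q) (hab : a ≠ b)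
    (hnadj : ¬ G.Adj a b) (hpair : ∀ w ∈ q.support, w = a ∨ w = b) : False := by
  have h0 : q.getVert 0 = a := q.getVert_zero
  have hL : q.getVert q.length = b := q.getVert_length
  by_cases h0' : q.length = 0
  · have e : q.getVert q.length = a := by rw [h0']; exact h0
    exact hab (e.symm.trans hL)
  by_cases h1' : q.length = 1
  · have h : G.Adj (q.getVert 0) (q.getVert 1) := q.adj_getVert_succ (by omega)
    have e : q.getVert 1 = b := by rw [show (1 : ℕ) = q.length from h1'.symm]; exact hL
    rw [q.getVert_zero, e] at h
    exact hnadj h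
  · have hlen : 2 ≤ q.length := by omega
    have hmem : q.getVert 1 ∈ q.support := by
      rw [Walk.mem_support_iff_exists_getVert]
      exact ⟨1, rfl, by omega⟩
    have hnd : q.support.Nodup := hq.1.support_nodup
    have hinj := List.nodup_iff_injective_get.mp hnd
    have hslen : q.support.length = q.length + 1 := q.length_support
    rcases hpair _ hmem with h1 | h1
    · have e1 : q.support.get ⟨1, by omega⟩ = q.support.get ⟨0, by omega⟩ := by
        rw [support_get_getVert, support_get_getVert, q.getVert_zero, h1]
      have := hinj e1
      simp at this
    · have e1 : q.support.get ⟨1, by omega⟩ = q.support.get ⟨q.length, by omega⟩ := by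
        rw [support_get_getVert, support_get_getVert, q.getVert_length, h1]
      have := hinj e1
      rw [Fin.mk.injEq] at this
      omega

lemma tpath_mem_cases {u v : V} (hadj : G.Adj u v) {p : G.Walk u v} (hp : TPath G p) :
    ∀ w ∈ p.support, w = u ∨ w = v ∨ (G.Adj u w ∧ G.Adj w v) := by
  have hlen : p.length ≤ 2 := by
    by_contra h
    push_neg at h
    refine hp.not_adj_getVert (i := 0) (j := p.length) (by omega) le_rfl ?_
    rw [p.getVert_zero, p.getVert_length]
    exact hadj
  intro w hw
  rw [Walk.mem_support_iff_exists_getVert] at hw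
  obtain ⟨k, hk, hkle⟩ := hw
  by_cases hk0 : k = 0
  · left; rw [← hk, hk0, p.getVert_zero]
  · by_cases hkL : k = p.length
    · right; left; rw [← hk, hkL, p.getVert_length]
    · have hk1' : k = 1 ∧ p.length = 2 := by omega
      obtain ⟨hk1, hpl⟩ := hk1'
      subst hk1
      right; right
      have hA : G.Adj (p.getVert 0) (p.getVert 1) := p.adj_getVert_succ (by omega)
      have hB : G.Adj (p.getVert 1) (p.getVert 2) := p.adj_getVert_succ (by omega)
      have hkv : p.getVert 2 = v := by
        rw [show (2 : ℕ) = p.length from hpl.symm]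
        exact p.getVert_length
      rw [p.getVert_zero, hk] at hA
      rw [hk, hkv] at hB
      exact ⟨hA, hB⟩

lemma tconvex_of_clique_p3 {C : Set V} (hclq : G.IsClique C) (hp3 : P3Convex G C) :
    TConvex G C := by
  intro u v hu hv p hp w hw
  by_cases huv : u = v
  · subst huv
    rw [Walk.isPath_iff_eq_nil.mp hp.1] at hw
    simp only [Walk.support_nil, List.mem_cons, List.not_mem_nil, or_false] at hw
    rwa [hw]
  · have hadj : G.Adj u v := hclq hu hv huv
    rcases tpath_mem_cases hadj hp w hw with rfl | rfl | ⟨h1, h2⟩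
    · exact hu
    · exact hv
    · by_contra hwC
      exact huv (hp3 w hwC u hu v hv h1.symm h2)

lemma subset_thull {S : Set V} : S ⊆ THull G S :=
  fun x hx => Set.mem_sInter.mpr fun _ hC => hC.1 hx

lemma thull_subset {S C : Set V} (hSC : S ⊆ C) (hC : TConvex G C) : THull G S ⊆ C :=
  fun x hx => (Set.mem_sInter.mp hx) C ⟨hSC, hC⟩

lemma tconvex_thull {S : Set V} : TConvex G (THull G S) := by
  intro u v hu hv p hp w hw
  refine Set.mem_sInter.mpr fun C hC => ?_
  exact hC.2 (Set.mem_sInter.mp hu C hC) (Set.mem_sInter.mp hv C hC) p hp w hw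

lemma tinterval_subset_thull {S : Set V} : TInterval G S ⊆ THull G S := by
  rintro w hw
  rcases hw with hw | ⟨u, hu, v, hv, p, hp, hw⟩
  · exact subset_thull hw
  · refine Set.mem_sInter.mpr fun C hC => ?_
    exact hC.2 (hC.1 hu) (hC.1 hv) p hp w hw

lemma p3_subset_tinterval {S : Set V} : P3Interval G S ⊆ TInterval G S := by
  rintro w hw
  rcases hw with hw | ⟨hwS, a, ha, b, hb, hab, hwa, hwb⟩
  · exact Or.inl hw
  · refine Or.inr ⟨a, ha, b, hb, Walk.cons hwa.symm (Walk.cons hwb Walk.nil),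
      tpath_two hwa.symm hwb hab hwa.ne hwb.ne, ?_⟩
    simp

lemma tinterval_subsingleton {S : Set V} (hs : S.Subsingleton) : TInterval G S = S := by
  apply Set.Subset.antisymm _ Set.subset_union_left
  rintro w hw
  rcases hw with hw | ⟨u, hu, v, hv, p, hp, hw⟩
  · exact hw
  · have huv : u = v := hs hu hv
    subst huv
    rw [Walk.isPath_iff_eq_nil.mp hp.1] at hw
    simp only [Walk.support_nil, List.mem_cons, List.not_mem_nil, or_false] at hw
    rwa [hw]

lemma p3_subsingleton {S : Set V} (hs : S.Subsingleton) : P3Interval G S = S := by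
  apply Set.Subset.antisymm _ Set.subset_union_left
  rintro w hw
  rcases hw with hw | ⟨hwS, a, ha, b, hb, hab, _, _⟩
  · exact hw
  · exact absurd (hs ha hb) hab

lemma tconvex_subsingleton {S : Set V} (hs : S.Subsingleton) : TConvex G S := by
  intro u v hu hv p hp w hw
  have huv : u = v := hs hu hv
  subst huv
  rw [Walk.isPath_iff_eq_nil.mp hp.1] at hw
  simp only [Walk.support_nil, List.mem_cons, List.not_mem_nil, or_false] at hw
  rwa [hw]

lemma clique_of_tconvex (hprime : IsPrime G) {C : Set V} (hC : TConvex G C)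
    (hne : C ≠ Set.univ) : G.IsClique C := by
  classical
  obtain ⟨x, hx⟩ : ∃ x, x ∉ C := by
    by_contra h
    push_neg at h
    exact hne (Set.eq_univ_of_forall h)
  set D : Set V := {y | ∃ p : G.Walk x y, ∀ w ∈ p.support, w ∉ C} with hDdef
  have hxD : x ∈ D := ⟨Walk.nil, by
    intro w hw
    simp only [Walk.support_nil, List.mem_cons, List.not_mem_nil, or_false] at hw
    rwa [hw]⟩
  have hDC : ∀ y ∈ D, y ∉ C := fun y hy => hy.choose_spec y (Walk.end_mem_support _)
  set K : Set V := {c | c ∈ C ∧ ∃ d ∈ D, G.Adj d c} with hKdef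
  have hKclique : G.IsClique K := by
    intro a ha b hb hab
    by_contra hnadj
    obtain ⟨haC, da, hda, hda_adj⟩ := ha
    obtain ⟨hbC, db, hdb, hdb_adj⟩ := hb
    obtain ⟨pa, hpa⟩ := hda
    obtain ⟨pb, hpb⟩ := hdb
    set w0 : G.Walk a b := Walk.cons hda_adj.symm (pa.reverse.append (pb.concat hdb_adj))
      with hw0def
    have hw0 : ∀ w ∈ w0.support, w = a ∨ w = b ∨ w ∈ D := by
      intro w hw
      rw [hw0def, Walk.support_cons, List.mem_cons] at hw
      rcases hw with rfl | hw
      · exact Or.inl rfl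
      rw [Walk.mem_support_append_iff] at hw
      rcases hw with hw | hw
      · rw [Walk.support_reverse, List.mem_reverse] at hw
        exact Or.inr (Or.inr ⟨pa.takeUntil w hw,
          fun z hz => hpa z (Walk.support_takeUntil_subset _ _ hz)⟩)
      · rw [Walk.support_concat, List.mem_append,
          List.mem_singleton] at hw
        rcases hw with hw | rfl
        · exact Or.inr (Or.inr ⟨pb.takeUntil w hw,
            fun z hz => hpb z (Walk.support_takeUntil_subset _ _ hz)⟩)
        · exact Or.inr (Or.inl rfl)
    obtain ⟨q, hq, hqs⟩ := exists_tpath w0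
    have hmem : ∀ w ∈ q.support, w ∈ C := hC haC hbC q hq
    have hpair : ∀ w ∈ q.support, w = a ∨ w = b := by
      intro w hw
      rcases hw0 w (hqs w hw) with h | h | h
      · exact Or.inl h
      · exact Or.inr h
      · exact absurd (hmem w hw) (hDC w h)
    exact no_tpath_pair hq hab hnadj hpair
  have hCK : C ⊆ K := by
    intro c hcC
    by_contra hcK
    refine hprime ⟨K, hKclique, x, c, fun h => hx h.1, hcK, ?_⟩
    intro p
    by_contra hcon
    push_neg at hcon
    have key : ∀ {y z : V} (r : G.Walk y z), z ∈ D →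
        (∀ w ∈ r.support, w ∉ K) → y ∈ D ∧ y ∉ C := by
      intro y z r
      induction r with
      | nil => exact fun hzD _ => ⟨hzD, hDC _ hzD⟩
      | @cons a bb cc h r ih =>
          intro hcD hr
          obtain ⟨hbD, hbC⟩ := ih hcD fun w hw => hr w (by
            rw [Walk.support_cons]; exact List.mem_cons_of_mem _ hw)
          have haC : a ∉ C := by
            intro haC
            exact hr a (Walk.start_mem_support _) ⟨haC, bb, hbD, h.symm⟩
          refine ⟨?_, haC⟩
          obtain ⟨pz, hpz⟩ := hbD
          refine ⟨pz.concat h.symm, ?_⟩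
          intro w hw
          rw [Walk.support_concat, List.mem_append,
            List.mem_singleton] at hw
          rcases hw with hw | rfl
          · exact hpz w hw
          · exact haC
    have hkey := key p.reverse hxD (by
      intro w hw
      rw [Walk.support_reverse, List.mem_reverse] at hw
      exact hcon w hw)
    exact hkey.2 hcC
  exact fun a ha b hb hab => hKclique (hCK ha) (hCK hb) hab

end Aux

theorem stmt_10 [Fintype V] (G : SimpleGraph V) (hconn : G.Connected)
    (hprime : IsPrime G) (S : Set V) :
    (THull G S = TInterval G S ∧ TInterval G S = P3Interval G S) ∨
    THull G S = Set.univ := by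
  classical
  by_cases hU : THull G S = Set.univ
  · exact Or.inr hU
  left
  by_cases hss : S.Subsingleton
  · have h1 : TInterval G S = S := tinterval_subsingleton hss
    have h2 : P3Interval G S = S := p3_subsingleton hss
    have h3 : THull G S = S :=
      Set.Subset.antisymm (thull_subset subset_rfl (tconvex_subsingleton hss)) subset_thull
    exact ⟨h3.trans h1.symm, h1.trans h2.symm⟩
  · obtain ⟨s, hs, t, ht, hst⟩ := Set.not_subsingleton_iff.mp hss
    have hclq : G.IsClique (THull G S) := clique_of_tconvex hprime tconvex_thull hU
    have hTP : TInterval G S = P3Interval G S := by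
      apply Set.Subset.antisymm _ p3_subset_tinterval
      rintro w hw
      rcases hw with hw | ⟨u, hu, v, hv, p, hp, hw⟩
      · exact Or.inl hw
      · by_cases huv : u = v
        · subst huv
          rw [SimpleGraph.Walk.isPath_iff_eq_nil.mp hp.1] at hw
          simp only [SimpleGraph.Walk.support_nil, List.mem_cons, List.not_mem_nil,
            or_false] at hw
          exact Or.inl (hw ▸ hu)
        · have hadj : G.Adj u v := hclq (subset_thull hu) (subset_thull hv) huv
          rcases tpath_mem_cases hadj hp w hw with rfl | rfl | ⟨h1, h2⟩
          · exact Or.inl hu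
          · exact Or.inl hv
          · by_cases hwS : w ∈ S
            · exact Or.inl hwS
            · exact Or.inr ⟨hwS, u, hu, v, hv, huv, h1.symm, h2⟩
    refine ⟨?_, hTP⟩
    apply Set.Subset.antisymm _ tinterval_subset_thull
    have hsub : TInterval G S ⊆ THull G S := tinterval_subset_thull
    have hclq' : G.IsClique (TInterval G S) := fun a ha b hb hab =>
      hclq (hsub ha) (hsub hb) hab
    have hp3 : P3Convex G (TInterval G S) := by
      intro w hw a ha b hb hwa hwb
      by_contra hab
      have hadj : G.Adj a b := hclq' ha hb hab
      have hwa' : w ≠ a := fun h => hw (h ▸ ha)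
      have hwb' : w ≠ b := fun h => hw (h ▸ hb)
      have htp := tpath_two hwa.symm hwb hab hwa' hwb'
      have hwH : w ∈ THull G S :=
        tconvex_thull (hsub ha) (hsub hb) _ htp w (by simp)
      have hwS : w ∉ S := fun h => hw (Or.inl h)
      have hws : G.Adj w s := hclq hwH (subset_thull hs) (fun h => hwS (h ▸ hs))
      have hwt : G.Adj w t := hclq hwH (subset_thull ht) (fun h => hwS (h ▸ ht))
      exact hw (p3_subset_tinterval (Or.inr ⟨hwS, s, hs, t, ht, hst, hws, hwt⟩))
    exact thull_subset (fun y hy => Or.inl hy) (tconvex_of_clique_p3 hclq' hp3)
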